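/- Let A ∈ ℝ^{m×n}, C ∈ ℝ^{p×n}, G = AᵀA + CᵀC, and let w be the minimum 2-norm solution of the GLS problem min ‖Ax‖₂ subject to ‖Cx − g‖₂ minimal (for any g ∈ ℝᵖ). Then AᵀA w is orthogonal to the null space of C. -/

import Mathlib

open Matrix

/-- If `w` is the minimum 2-norm solution of the GLS problem
`min ‖Ax‖ s.t. ‖Cx − g‖ minimal`, then `AᵀA w ⟂ N(C)`. -/
theorem AtAw_orthogonal_nullC (m n p : ℕ) (A : Matrix (Fin m) (Fin n) ℝ)
    (C : Matrix (Fin p) (Fin n) ℝ) (g : EuclideanSpace ℝ (Fin p))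
    (w : EuclideanSpace ℝ (Fin n))
    (hw_feas : ∀ y, ‖Matrix.toEuclideanLin C w - g‖ ≤ ‖Matrix.toEuclideanLin C y - g‖)
    (hw_min : ∀ y, (∀ z, ‖Matrix.toEuclideanLin C y - g‖ ≤ ‖Matrix.toEuclideanLin C z - g‖) →
      ‖Matrix.toEuclideanLin A w‖ ≤ ‖Matrix.toEuclideanLin A y‖)
    (hw_norm : ∀ y, ((∀ z, ‖Matrix.toEuclideanLin C y - g‖ ≤ ‖Matrix.toEuclideanLin C z - g‖) ∧
        (∀ z, (∀ v, ‖Matrix.toEuclideanLin C z - g‖ ≤ ‖Matrix.toEuclideanLin C v - g‖) →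
          ‖Matrix.toEuclideanLin A y‖ ≤ ‖Matrix.toEuclideanLin A z‖)) → ‖w‖ ≤ ‖y‖) :
    ∀ z ∈ LinearMap.ker (Matrix.toEuclideanLin C),
      inner ℝ (Matrix.toEuclideanLin Aᵀ (Matrix.toEuclideanLin A w)) z = (0 : ℝ) := by
  intro z hz
  have hzC : Matrix.toEuclideanLin C z = 0 := hz
  -- reduce to ⟪Aw, Az⟫ = 0 using the adjoint
  have hA : Aᵀ = Aᴴ := (Matrix.conjTranspose_eq_transpose_of_trivial A).symm
  have hadj : (inner ℝ (Matrix.toEuclideanLin Aᵀ (Matrix.toEuclideanLin A w)) z : ℝ)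
      = inner ℝ (Matrix.toEuclideanLin A w) (Matrix.toEuclideanLin A z) := by
    rw [hA, Matrix.toEuclideanLin_conjTranspose_eq_adjoint, LinearMap.adjoint_inner_left]
  rw [hadj]
  set u := Matrix.toEuclideanLin A w with hu
  set v := Matrix.toEuclideanLin A z with hv
  -- for every t, w + t • z is feasible, so ‖u‖ ≤ ‖u + t • v‖
  have key : ∀ t : ℝ, ‖u‖ ≤ ‖u + t • v‖ := by
    intro t
    have hfeas : ∀ y, ‖Matrix.toEuclideanLin C (w + t • z) - g‖ ≤
        ‖Matrix.toEuclideanLin C y - g‖ := by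
      intro y
      have : Matrix.toEuclideanLin C (w + t • z) = Matrix.toEuclideanLin C w := by
        rw [map_add, LinearMap.map_smul, hzC, smul_zero, add_zero]
      rw [this]; exact hw_feas y
    have := hw_min (w + t • z) hfeas
    rwa [map_add, LinearMap.map_smul] at this
  -- quadratic expansion: 0 ≤ 2 t ⟪u,v⟫ + t² ‖v‖²
  have quad : ∀ t : ℝ, 0 ≤ 2 * t * inner ℝ u v + t ^ 2 * ‖v‖ ^ 2 := by
    intro t
    have h1 : ‖u‖ ^ 2 ≤ ‖u + t • v‖ ^ 2 := by
      have := key t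
      nlinarith [norm_nonneg u, norm_nonneg (u + t • v)]
    have h2 : ‖u + t • v‖ ^ 2 = ‖u‖ ^ 2 + 2 * (inner ℝ u (t • v) : ℝ) + ‖t • v‖ ^ 2 := by
      have := @norm_add_sq_real _ _ _ u (t • v)
      linarith
    rw [h2] at h1
    have h3 : (inner ℝ u (t • v) : ℝ) = t * inner ℝ u v := real_inner_smul_right u v t
    have h4 : ‖t • v‖ ^ 2 = t ^ 2 * ‖v‖ ^ 2 := by
      rw [norm_smul, mul_pow]; simp [sq_abs]
    rw [h3, h4] at h1
    linarith
  by_cases hvz : v = 0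
  · simp [hvz, inner_zero_right]
  · have hvpos : (0:ℝ) < ‖v‖ ^ 2 := pow_pos (norm_pos_iff.mpr hvz) 2
    set c : ℝ := inner ℝ u v with hc
    have h := quad (-c / ‖v‖ ^ 2)
    have hne : (‖v‖ : ℝ) ^ 2 ≠ 0 := ne_of_gt hvpos
    have key2 : 2 * (-c / ‖v‖ ^ 2) * c + (-c / ‖v‖ ^ 2) ^ 2 * ‖v‖ ^ 2
        = -(c ^ 2) / ‖v‖ ^ 2 := by
      field_simp
      ring
    rw [key2] at h
    have h5 : c ^ 2 / ‖v‖ ^ 2 ≤ 0 := by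
      rw [neg_div] at h
      linarith
    have h6 : c ^ 2 ≤ 0 := by
      rcases div_nonpos_iff.mp h5 with ⟨ha, _⟩ | ⟨ha, _⟩
      · nlinarith [sq_nonneg c]
      · exact ha
    nlinarith [sq_nonneg c]
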